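/- Let the linear order ℒ = η + η × ω₁* where η is the lexicographic order of finitely supported functions ω → ω₁ and ω₁* is ω₁ reversed. Then ℒ contains a strictly decreasing sequence of length ω₁, but for every α < ω₁ the order η + η × α* contains no strictly decreasing sequence of length ω₁. -/

import Mathlib

open Cardinal

noncomputable section

/-- ω₁ as an ordinal. -/
abbrev om1 : Ordinal := (Cardinal.aleph 1).ord

/-- The countable ordinals, i.e. ordinals `< ω₁`, as a linearly ordered type. -/
abbrev O1 : Type 1 := {o : Ordinal // o < om1}

instance : Zero O1 := ⟨⟨0, by rw [Cardinal.lt_ord]; simpa using Cardinal.aleph_pos 1⟩⟩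

/-- η : the finitely supported functions ω → ω₁, ordered lexicographically:
`f < g` iff `f n < g n` at the least `n` where `f` and `g` differ. -/
abbrev Eta : Type 1 := Lex (ℕ →₀ O1)

namespace EtaAux

universe u

/-- Addition on `O1`. -/
def oadd (a b : O1) : O1 :=
  ⟨a.1 + b.1, by
    rw [Cardinal.lt_ord, Ordinal.card_add]
    exact Cardinal.add_lt_of_lt (aleph0_le_aleph 1)
      (Cardinal.lt_ord.mp a.2) (Cardinal.lt_ord.mp b.2)⟩

lemma le_oadd (a b : O1) : a ≤ oadd a b := le_self_add (a := a.1) (b := b.1)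

lemma oadd_lt_oadd {a : O1} {b c : O1} (h : b < c) : oadd a b < oadd a c := by
  show a.1 + b.1 < a.1 + c.1
  exact (add_lt_add_iff_left a.1).mpr h

/-- A countable family in `O1` is bounded. -/
lemma exists_bound (g : ℕ → O1) : ∃ T : O1, ∀ n, g n ≤ T := by
  have h1 : iSup (fun n => (g n).1) < om1 := by
    apply Ordinal.iSup_lt_ord _ (fun n => (g n).2)
    rw [Cardinal.isRegular_aleph_one.cof_eq]
    exact lt_of_le_of_lt Cardinal.mk_le_aleph0 Cardinal.aleph0_lt_aleph_one
  exact ⟨⟨_, h1⟩, fun n => Ordinal.le_iSup (fun n => (g n).1) n⟩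

/-- An antitone function from `O1` to `O1` is eventually constant. -/
lemma anti_eventually_const (f : O1 → O1) (hf : Antitone f) :
    ∃ T : O1, ∀ β, T ≤ β → f β = f T := by
  obtain ⟨a, ⟨β₀, rfl⟩, ha⟩ := (IsWellFounded.wf : WellFounded ((· < ·) : O1 → O1 → Prop)).has_min
    (Set.range f) (Set.range_nonempty f)
  refine ⟨β₀, fun β hβ => ?_⟩
  exact le_antisymm (hf hβ) (not_lt.mp (ha (f β) (Set.mem_range_self β)))

/-- A monotone function from `O1` into a countable linear order is eventually constant. -/
lemma mono_eventually_const {C : Type*} [LinearOrder C] [Countable C]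
    (f : O1 → C) (hf : Monotone f) : ∃ T : O1, ∀ β, T ≤ β → f β = f T := by
  have hcof : ∃ v : C, ∀ T : O1, ∃ β, T ≤ β ∧ f β = v := by
    by_contra h
    push_neg at h
    choose Tv hTv using h
    have : Nonempty C := ⟨f 0⟩
    obtain ⟨e, he⟩ := exists_surjective_nat C
    obtain ⟨B, hB⟩ := exists_bound (fun n => Tv (e n))
    obtain ⟨n, hn⟩ := he (f B)
    exact hTv (e n) B (hB n) hn.symm
  obtain ⟨v, hv⟩ := hcof
  obtain ⟨β₀, -, hβ₀⟩ := hv 0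
  refine ⟨β₀, fun β hβ => ?_⟩
  obtain ⟨β', hβ', hβ'v⟩ := hv β
  rw [hβ₀]
  exact le_antisymm (hβ'v ▸ hf hβ') (hβ₀ ▸ hf hβ)

/-- η contains no strictly decreasing ω₁-sequence. -/
lemma no_anti_eta (s : O1 → Eta) : ¬ StrictAnti s := by
  intro hs
  have key : ∀ n : ℕ, ∃ T : O1, ∀ β β', T ≤ β → T ≤ β' →
      ∀ k, k < n → ofLex (s β) k = ofLex (s β') k := by
    intro n
    induction n with
    | zero => exact ⟨0, fun β β' _ _ k hk => absurd hk (Nat.not_lt_zero k)⟩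
    | succ n ih =>
      obtain ⟨T, hT⟩ := ih
      set f : O1 → O1 := fun β => ofLex (s (max T β)) n with hfdef
      have hanti : Antitone f := by
        intro β β' hββ'
        have hle : s (max T β') ≤ s (max T β) :=
          hs.antitone (max_le_max le_rfl hββ')
        show ofLex (s (max T β')) n ≤ ofLex (s (max T β)) n
        rcases lt_or_eq_of_le hle with hlt | heq
        · obtain ⟨i, hib, hiv⟩ := Finsupp.Lex.lt_iff.mp hlt
          have hni : n ≤ i := by
            by_contra hni
            push_neg at hni
            exact absurd (hT _ _ (le_max_left _ _) (le_max_left _ _) i hni) (ne_of_lt hiv)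
          rcases lt_or_eq_of_le hni with hni | hni
          · exact le_of_eq (hib n hni)
          · exact le_of_lt (by rw [hni]; exact hiv)
        · rw [heq]
      obtain ⟨T₁, hT₁⟩ := anti_eventually_const f hanti
      refine ⟨max T T₁, fun β β' hβ hβ' k hk => ?_⟩
      rcases Nat.lt_succ_iff_lt_or_eq.mp hk with hk | rfl
      · exact hT β β' (le_trans (le_max_left _ _) hβ) (le_trans (le_max_left _ _) hβ') k hk
      · have h1 : f β = f T₁ := hT₁ β (le_trans (le_max_right _ _) hβ)
        have h2 : f β' = f T₁ := hT₁ β' (le_trans (le_max_right _ _) hβ')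
        have e1 : max T β = β := max_eq_right (le_trans (le_max_left _ _) hβ)
        have e2 : max T β' = β' := max_eq_right (le_trans (le_max_left _ _) hβ')
        have := h1.trans h2.symm
        simpa only [hfdef, e1, e2] using this
  choose T hT using key
  obtain ⟨B, hB⟩ := exists_bound T
  have hsucc : B.1 + 1 < om1 := by
    rw [Ordinal.add_one_eq_succ]
    exact (Cardinal.isSuccLimit_ord (aleph0_le_aleph 1)).succ_lt B.2
  set B' : O1 := ⟨B.1 + 1, hsucc⟩ with hB'def
  have hlt : B < B' := by
    show B.1 < B.1 + 1
    rw [Ordinal.add_one_eq_succ]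
    exact Order.lt_succ B.1
  have hBle : B ≤ B' := le_of_lt hlt
  have heq : s B = s B' := by
    have h0 : ofLex (s B) = ofLex (s B') :=
      Finsupp.ext (fun k => hT (k + 1) B B' (hB _) (le_trans (hB _) hBle) k (Nat.lt_succ_self k))
    exact h0
  exact lt_irrefl _ (heq ▸ hs hlt)

/-- `{o // o < α}` is countable for `α < ω₁`. -/
lemma countable_lt {α : Ordinal.{u}} (hα : α < (Cardinal.aleph 1).ord) :
    Countable {o : Ordinal.{u} // o < α} := by
  rw [← Cardinal.mk_le_aleph0_iff]
  have h1 : #{o : Ordinal.{u} // o < α} = Cardinal.lift.{u + 1} α.card :=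
    Ordinal.mk_Iio_ordinal α
  have h2 : α.card ≤ ℵ₀ := by
    have h3 := Cardinal.lt_ord.mp hα
    rwa [← Cardinal.succ_aleph0, Order.lt_succ_iff] at h3
  rw [h1, Cardinal.lift_le_aleph0]
  exact h2

/-- `η × α*` contains no strictly decreasing ω₁-sequence for countable `α`. -/
lemma no_anti_prod {α : Ordinal.{u}} (hα : α < (Cardinal.aleph 1).ord)
    (s : O1 → Lex (({o : Ordinal // o < α})ᵒᵈ × Eta)) : ¬ StrictAnti s := by
  intro hs
  have hC : Countable {o : Ordinal // o < α} := countable_lt hα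
  set f : O1 → {o : Ordinal // o < α} :=
    fun β => OrderDual.ofDual (ofLex (s β)).1 with hfdef
  have hf : Monotone f := by
    intro β β' hββ'
    rcases lt_or_eq_of_le (hs.antitone hββ') with hlt | heq
    · rcases Prod.Lex.lt_iff.mp hlt with h1 | ⟨h1, -⟩
      · exact le_of_lt h1
      · exact le_of_eq (congrArg OrderDual.ofDual h1).symm
    · exact le_of_eq (congrArg (fun x => OrderDual.ofDual (ofLex x).1) heq).symm
  obtain ⟨T, hT⟩ := mono_eventually_const f hf
  have hfst : ∀ β, (ofLex (s (oadd T β))).1 = (ofLex (s T)).1 := by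
    intro β
    have := hT (oadd T β) (le_oadd T β)
    exact congrArg OrderDual.toDual this
  refine no_anti_eta (fun β => (ofLex (s (oadd T β))).2) ?_
  intro β β' hββ'
  have h2 : s (oadd T β') < s (oadd T β) := hs (oadd_lt_oadd hββ')
  rcases Prod.Lex.lt_iff.mp h2 with h1 | ⟨-, h1⟩
  · have h1' : (ofLex (s (oadd T β'))).1 < (ofLex (s (oadd T β))).1 := h1
    rw [hfst β, hfst β'] at h1'
    exact absurd h1' (lt_irrefl _)
  · exact h1

/-- `η + η × α*` contains no strictly decreasing ω₁-sequence for countable `α`. -/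
lemma no_anti_sum {α : Ordinal.{u}} (hα : α < (Cardinal.aleph 1).ord)
    (s : O1 → Lex (Eta ⊕ Lex (({o : Ordinal // o < α})ᵒᵈ × Eta))) : ¬ StrictAnti s := by
  intro hs
  by_cases hall : ∀ β, ∃ y, s β = toLex (Sum.inr y)
  · choose t ht using hall
    refine no_anti_prod hα t ?_
    intro β β' hββ'
    have := hs hββ'
    rw [ht β, ht β'] at this
    exact Sum.Lex.inr_lt_inr_iff.mp this
  · push_neg at hall
    obtain ⟨β₀, hβ₀⟩ := hall
    have hinl : ∀ β, ∃ x, s (oadd β₀ β) = toLex (Sum.inl x) := by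
      intro β
      have hle : s (oadd β₀ β) ≤ s β₀ := hs.antitone (le_oadd β₀ β)
      rcases h : ofLex (s β₀) with x | y
      · have hsx : s β₀ = toLex (Sum.inl x) := by rw [← h]; rfl
        rcases h2 : ofLex (s (oadd β₀ β)) with x' | y'
        · exact ⟨x', by rw [← h2]; rfl⟩
        · exfalso
          have hsy : s (oadd β₀ β) = toLex (Sum.inr y') := by rw [← h2]; rfl
          rw [hsx, hsy] at hle
          exact Sum.Lex.not_inr_le_inl hle
      · exact absurd (by rw [← h]; rfl) (hβ₀ y)
    choose u hu using hinl
    refine no_anti_eta u ?_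
    intro β β' hββ'
    have := hs (oadd_lt_oadd (a := β₀) hββ')
    rw [hu β, hu β'] at this
    exact Sum.Lex.inl_lt_inl_iff.mp this

end EtaAux

/-- The order `ℒ = η + η × ω₁*` contains a strictly decreasing sequence of length ω₁,
but for every `α < ω₁`, the order `η + η × α*` contains no strictly decreasing
sequence of length ω₁. -/
theorem eta_add_eta_mul_omega1_rev_descending :
    (∃ s : O1 → Lex (Eta ⊕ Lex (O1ᵒᵈ × Eta)), StrictAnti s) ∧
    (∀ α : Ordinal, α < om1 →
      ∀ s : O1 → Lex (Eta ⊕ Lex (({o : Ordinal // o < α})ᵒᵈ × Eta)), ¬ StrictAnti s) := by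
  constructor
  · refine ⟨fun β => toLex (Sum.inr (toLex (OrderDual.toDual β, toLex 0))), ?_⟩
    intro β β' hββ'
    apply Sum.Lex.inr_lt_inr_iff.mpr
    exact Prod.Lex.lt_iff.mpr (Or.inl hββ')
  · intro α hα s
    exact EtaAux.no_anti_sum hα s
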